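/- arXiv:1304.3285 — 2 statements merged into one kernel-verified Lean document; each statement's English description precedes it below -/
import Mathlib

section
/- Let f : 2^V → ℝ be a nonnegative submodular function on a finite ground set V, and let A be a set such that f(A ∪ {w}) ≤ f(A) for all w ∈ V \ A and f(A \ {w}) ≤ f(A) for all w ∈ A (i.e., A is a local optimum under single-element additions and deletions). Then 2·f(A) + f(V \ A) ≥ f(S) for every S ⊆ V; in particular max(f(A), f(V\A)) ≥ (1/3)·max_{S⊆V} f(S). -/
theorem local_optimum_third_approx
    {V : Type*} [Fintype V] [DecidableEq V]
    (f : Finset V → ℝ)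
    (hsub : ∀ A B : Finset V, f (A ∪ B) + f (A ∩ B) ≤ f A + f B)
    (hnn : ∀ S : Finset V, 0 ≤ f S)
    (A : Finset V)
    (hadd : ∀ w ∉ A, f (insert w A) ≤ f A)
    (hdel : ∀ w ∈ A, f (A.erase w) ≤ f A) :
    (∀ S : Finset V, 2 * f A + f (Finset.univ \ A) ≥ f S) ∧
    (∀ S : Finset V, max (f A) (f (Finset.univ \ A)) ≥ (1 / 3) * f S) := by
  -- supersets of A have value ≤ f A
  have hsup : ∀ n (B : Finset V), (B \ A).card = n → A ⊆ B → f B ≤ f A := by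
    intro n
    induction n with
    | zero =>
      intro B hc hAB
      have : B \ A = ∅ := Finset.card_eq_zero.mp hc
      have : B = A := Finset.Subset.antisymm (by
        intro x hx
        by_contra hxA
        exact absurd (Finset.mem_sdiff.mpr ⟨hx, hxA⟩) (by simp [this])) hAB
      rw [this]
    | succ n ih =>
      intro B hc hAB
      obtain ⟨w, hw⟩ : (B \ A).Nonempty := Finset.card_pos.mp (by omega)
      obtain ⟨hwB, hwA⟩ := Finset.mem_sdiff.mp hw
      have hAe : A ⊆ B.erase w := fun x hx =>
        Finset.mem_erase.mpr ⟨fun h => hwA (h ▸ hx), hAB hx⟩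
      have hunion : insert w A ∪ B.erase w = B := by
        ext x
        simp only [Finset.mem_union, Finset.mem_insert, Finset.mem_erase]
        constructor
        · rintro ((rfl | h) | ⟨_, h⟩)
          · exact hwB
          · exact hAB h
          · exact h
        · intro hx
          by_cases hxw : x = w
          · exact Or.inl (Or.inl hxw)
          · exact Or.inr ⟨hxw, hx⟩
      have hinter : insert w A ∩ B.erase w = A := by
        ext x
        simp only [Finset.mem_inter, Finset.mem_insert, Finset.mem_erase]
        constructor
        · rintro ⟨rfl | h, hne, _⟩
          · exact absurd rfl hne
          · exact h
        · intro hx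
          exact ⟨Or.inr hx, fun h => hwA (h ▸ hx), hAB hx⟩
      have h1 := hsub (insert w A) (B.erase w)
      rw [hunion, hinter] at h1
      have h2 : f (B.erase w) ≤ f A := by
        apply ih
        · rw [Finset.erase_sdiff_comm, Finset.card_erase_of_mem hw]; omega
        · exact hAe
      have h3 := hadd w hwA
      linarith
  -- subsets of A have value ≤ f A
  have hsubl : ∀ n (B : Finset V), (A \ B).card = n → B ⊆ A → f B ≤ f A := by
    intro n
    induction n with
    | zero =>
      intro B hc hBA
      have h : A \ B = ∅ := Finset.card_eq_zero.mp hc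
      have : B = A := Finset.Subset.antisymm hBA (by
        intro x hx
        by_contra hxB
        exact absurd (Finset.mem_sdiff.mpr ⟨hx, hxB⟩) (by simp [h]))
      rw [this]
    | succ n ih =>
      intro B hc hBA
      obtain ⟨w, hw⟩ : (A \ B).Nonempty := Finset.card_pos.mp (by omega)
      obtain ⟨hwA, hwB⟩ := Finset.mem_sdiff.mp hw
      have hiB : insert w B ⊆ A := Finset.insert_subset hwA hBA
      have hunion : A.erase w ∪ insert w B = A := by
        ext x
        simp only [Finset.mem_union, Finset.mem_erase, Finset.mem_insert]
        constructor
        · rintro (⟨_, h⟩ | (rfl | h))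
          · exact h
          · exact hwA
          · exact hBA h
        · intro hx
          by_cases hxw : x = w
          · exact Or.inr (Or.inl hxw)
          · exact Or.inl ⟨hxw, hx⟩
      have hinter : A.erase w ∩ insert w B = B := by
        ext x
        simp only [Finset.mem_inter, Finset.mem_erase, Finset.mem_insert]
        constructor
        · rintro ⟨⟨hne, _⟩, rfl | h⟩
          · exact absurd rfl hne
          · exact h
        · intro hx
          exact ⟨⟨fun h => hwB (h ▸ hx), hBA hx⟩, Or.inr hx⟩
      have h1 := hsub (A.erase w) (insert w B)
      rw [hunion, hinter] at h1
      have h2 : f (insert w B) ≤ f A := by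
        apply ih
        · have : A \ insert w B = (A \ B).erase w := by
            ext x
            simp only [Finset.mem_sdiff, Finset.mem_insert, Finset.mem_erase]
            tauto
          rw [this, Finset.card_erase_of_mem hw]; omega
        · exact hiB
      have h3 := hdel w hwA
      linarith
  have key : ∀ S : Finset V, 2 * f A + f (Finset.univ \ A) ≥ f S := by
    intro S
    -- f S ≤ f (S ∩ A) + f (S \ A)
    have e1 : (S ∩ A) ∪ (S \ A) = S := by
      ext x; simp only [Finset.mem_union, Finset.mem_inter, Finset.mem_sdiff]; tauto
    have e2 : (S ∩ A) ∩ (S \ A) = ∅ := by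
      ext x; simp only [Finset.mem_inter, Finset.mem_sdiff, Finset.notMem_empty,
        iff_false]; tauto
    have q1 := hsub (S ∩ A) (S \ A)
    rw [e1, e2] at q1
    have q1' : f S ≤ f (S ∩ A) + f (S \ A) := by
      have := hnn (∅ : Finset V); linarith
    -- f (S ∩ A) ≤ f A
    have q2 : f (S ∩ A) ≤ f A := hsubl _ (S ∩ A) rfl (Finset.inter_subset_right)
    -- f (S \ A) ≤ f (S ∪ A) + f (univ \ A)
    have e3 : (S ∪ A) ∪ (Finset.univ \ A) = Finset.univ := by
      ext x; simp only [Finset.mem_union, Finset.mem_sdiff, Finset.mem_univ,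
        iff_true]; tauto
    have e4 : (S ∪ A) ∩ (Finset.univ \ A) = S \ A := by
      ext x; simp only [Finset.mem_inter, Finset.mem_union, Finset.mem_sdiff,
        Finset.mem_univ, true_and]; tauto
    have q3 := hsub (S ∪ A) (Finset.univ \ A)
    rw [e3, e4] at q3
    have q3' : f (S \ A) ≤ f (S ∪ A) + f (Finset.univ \ A) := by
      have := hnn (Finset.univ : Finset V); linarith
    have q4 : f (S ∪ A) ≤ f A := hsup _ (S ∪ A) rfl (Finset.subset_union_right)
    linarith
  refine ⟨key, fun S => ?_⟩
  have h1 := key S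
  have h2 : f A ≤ max (f A) (f (Finset.univ \ A)) := le_max_left _ _
  have h3 : f (Finset.univ \ A) ≤ max (f A) (f (Finset.univ \ A)) := le_max_right _ _
  linarith
end

section
/- Let V = {1,...,K}, S ⊆ V, c ∈ ℕ, and let f(A) = -(1/(2σ²))·Σ_{i∈A}Σ_{j∈A} P(i,j) + Σ_{i∈A} ω(i) - log((c + |A ∩ S|)!) where P(i,j) = Σ_{d=1}^D Φ(i,d)·Φ(j,d) with Φ entrywise nonnegative, σ > 0 and ω : V → ℝ. Then f is submodular. (This is the MEIBP per-row objective F(Z_{n·}).) -/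
theorem meibp_objective_submodular
    (K D : ℕ) (Φ : Fin K → Fin D → ℝ) (hΦ : ∀ i d, 0 ≤ Φ i d)
    (σ : ℝ) (hσ : 0 < σ) (ω : Fin K → ℝ)
    (S : Finset (Fin K)) (c : ℕ)
    (f : Finset (Fin K) → ℝ)
    (hf : ∀ A : Finset (Fin K),
        f A = -(1 / (2 * σ ^ 2)) *
              (∑ i ∈ A, ∑ j ∈ A, ∑ d, Φ i d * Φ j d)
            + (∑ i ∈ A, ω i)
            - Real.log (Nat.factorial (c + (A ∩ S).card))) :
    ∀ A B : Finset (Fin K), A ⊆ B → ∀ e ∉ B,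
      f (insert e A) - f A ≥ f (insert e B) - f B := by
  intro A B hAB e heB
  have heA : e ∉ A := fun h => heB (hAB h)
  set P : Fin K → Fin K → ℝ := fun i j => ∑ d, Φ i d * Φ j d with hP
  have hPnn : ∀ i j, 0 ≤ P i j := fun i j =>
    Finset.sum_nonneg fun d _ => mul_nonneg (hΦ i d) (hΦ j d)
  have key : ∀ C : Finset (Fin K), e ∉ C →
      f (insert e C) - f C
        = -(1 / (2 * σ ^ 2)) * (P e e + ∑ i ∈ C, (P i e + P e i)) + ω e
          - (Real.log (Nat.factorial (c + ((insert e C) ∩ S).card))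
             - Real.log (Nat.factorial (c + (C ∩ S).card))) := by
    intro C heC
    rw [hf, hf]
    have hsum : ∑ i ∈ insert e C, ∑ j ∈ insert e C, P i j
        = (∑ i ∈ C, ∑ j ∈ C, P i j) + (P e e + ∑ i ∈ C, (P i e + P e i)) := by
      rw [Finset.sum_insert heC]
      rw [Finset.sum_insert heC]
      have : ∀ i ∈ C, ∑ j ∈ insert e C, P i j = P i e + ∑ j ∈ C, P i j :=
        fun i _ => Finset.sum_insert heC
      rw [Finset.sum_congr rfl this, Finset.sum_add_distrib, Finset.sum_add_distrib]
      ring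
    rw [Finset.sum_insert heC (f := ω)]
    rw [show (∑ i ∈ insert e C, ∑ j ∈ insert e C, ∑ d, Φ i d * Φ j d)
        = ∑ i ∈ insert e C, ∑ j ∈ insert e C, P i j from rfl,
      show (∑ i ∈ C, ∑ j ∈ C, ∑ d, Φ i d * Φ j d) = ∑ i ∈ C, ∑ j ∈ C, P i j from rfl,
      hsum]
    ring
  rw [key A heA, key B heB]
  -- quadratic part comparison
  have hsle : (∑ i ∈ A, (P i e + P e i)) ≤ ∑ i ∈ B, (P i e + P e i) :=
    Finset.sum_le_sum_of_subset_of_nonneg hAB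
      (fun i _ _ => add_nonneg (hPnn i e) (hPnn e i))
  have hcoef : -(1 / (2 * σ ^ 2)) ≤ 0 := by
    have : (0:ℝ) < σ ^ 2 := by positivity
    have : (0:ℝ) ≤ 1 / (2 * σ ^ 2) := by positivity
    linarith
  have hquad : -(1 / (2 * σ ^ 2)) * (P e e + ∑ i ∈ B, (P i e + P e i))
      ≤ -(1 / (2 * σ ^ 2)) * (P e e + ∑ i ∈ A, (P i e + P e i)) :=
    mul_le_mul_of_nonpos_left (by linarith) hcoef
  -- log-factorial part comparison
  have hcard : (A ∩ S).card ≤ (B ∩ S).card :=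
    Finset.card_le_card (Finset.inter_subset_inter hAB (Finset.Subset.refl S))
  have hlog : Real.log (Nat.factorial (c + ((insert e A) ∩ S).card))
        - Real.log (Nat.factorial (c + (A ∩ S).card))
      ≤ Real.log (Nat.factorial (c + ((insert e B) ∩ S).card))
        - Real.log (Nat.factorial (c + (B ∩ S).card)) := by
    by_cases heS : e ∈ S
    · have hiA : (insert e A) ∩ S = insert e (A ∩ S) := by
        rw [Finset.insert_inter_of_mem heS]
      have hiB : (insert e B) ∩ S = insert e (B ∩ S) := by
        rw [Finset.insert_inter_of_mem heS]
      have hcA : ((insert e A) ∩ S).card = (A ∩ S).card + 1 := by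
        rw [hiA, Finset.card_insert_of_notMem (fun h => heA (Finset.mem_of_mem_inter_left h))]
      have hcB : ((insert e B) ∩ S).card = (B ∩ S).card + 1 := by
        rw [hiB, Finset.card_insert_of_notMem (fun h => heB (Finset.mem_of_mem_inter_left h))]
      have step : ∀ m : ℕ,
          Real.log (Nat.factorial (c + (m + 1))) - Real.log (Nat.factorial (c + m))
            = Real.log (c + m + 1 : ℕ) := by
        intro m
        have : c + (m + 1) = (c + m) + 1 := by ring
        rw [this, Nat.factorial_succ, Nat.cast_mul,
          Real.log_mul (by exact_mod_cast Nat.succ_ne_zero (c + m))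
            (by exact_mod_cast (Nat.factorial_pos (c + m)).ne')]
        push_cast
        ring
      rw [hcA, hcB, step, step]
      apply Real.log_le_log (by exact_mod_cast Nat.succ_pos (c + (A ∩ S).card))
      exact_mod_cast Nat.succ_le_succ (Nat.add_le_add_left hcard c)
    · rw [Finset.insert_inter_of_notMem heS, Finset.insert_inter_of_notMem heS]
      simp
  linarith
end
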